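/- Let n ≥ 3 be an integer, m = (n−2)/(n+2), ρ ∈ {1, 0, −1}, β ≥ 0 with γ = (2β+ρ)/(1−m) > 0. If u₁ and u₂ are two positive smooth radially symmetric solutions of ((n−1)/m)·Δ(u^m) + β·(x·∇u) + γ·u = 0 on ℝⁿ with u₁(0) = u₂(0), then u₁ = u₂ on all of ℝⁿ; that is, radially symmetric gradient Yamabe solitons are uniquely determined by the value of the conformal factor at the origin. -/

import Mathlib

open Real MeasureTheory Metric
open scoped Topology RealInnerProductSpace

noncomputable section

/-- Euclidean space ℝⁿ. -/
abbrev Euc (n : ℕ) := EuclideanSpace ℝ (Fin n)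

/-- Euclidean Laplacian: sum of pure second derivatives in the coordinate directions. -/
def lap {n : ℕ} (f : Euc n → ℝ) (x : Euc n) : ℝ :=
  ∑ i : Fin n, fderiv ℝ (fun y => fderiv ℝ f y (EuclideanSpace.single i 1)) x
    (EuclideanSpace.single i 1)

/-- The conformally flat Yamabe soliton equation
`((n-1)/m)·Δ(u^m) + β·(x·∇u) + γ·u = 0` on ℝⁿ. -/
def YamabePDE {n : ℕ} (m β γ : ℝ) (u : Euc n → ℝ) : Prop :=
  ∀ x : Euc n, ((n : ℝ) - 1) / m * lap (fun y => u y ^ m) x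
      + β * ⟪x, gradient u x⟫ + γ * u x = 0

/-- A function on ℝⁿ is radially symmetric if it depends only on the norm. -/
def IsRadial {n : ℕ} (u : Euc n → ℝ) : Prop :=
  ∀ x y : Euc n, ‖x‖ = ‖y‖ → u x = u y

/-- Scalar curvature of the conformally flat metric g = u^{4/(n+2)}·dx²:
`R = -(4(n-1)/(n-2))·u⁻¹·Δ(u^m)`. -/
def scalarCurv {n : ℕ} (m : ℝ) (u : Euc n → ℝ) (x : Euc n) : ℝ :=
  -(4 * ((n : ℝ) - 1) / ((n : ℝ) - 2)) * lap (fun y => u y ^ m) x / u x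


/-! ### Auxiliary lemmas -/


/-- MVT bound: continuous on [a,b], differentiable on (a,b) with |f'| ≤ K gives
|f b - f a| ≤ K (b - a). -/
lemma abs_sub_le_of_deriv_le {f f' : ℝ → ℝ} {a b K : ℝ} (hab : a ≤ b)
    (hc : ContinuousOn f (Set.Icc a b))
    (hd : ∀ t ∈ Set.Ioo a b, HasDerivAt f (f' t) t)
    (hK : ∀ t ∈ Set.Ioo a b, |f' t| ≤ K) :
    |f b - f a| ≤ K * (b - a) := by
  rcases eq_or_lt_of_le hab with rfl | hlt
  · norm_num
  · obtain ⟨c, hc', hceq⟩ := exists_hasDerivAt_eq_slope f f' hlt hc hd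
    have : f b - f a = f' c * (b - a) := by
      have hba : b - a ≠ 0 := by linarith
      field_simp at hceq
      linarith [hceq]
    rw [this, abs_mul, abs_of_nonneg (by linarith : (0:ℝ) ≤ b - a)]
    exact mul_le_mul_of_nonneg_right (hK c hc') (by linarith)

/-- Lipschitz bound for rpow on a positive interval. -/
lemma abs_rpow_sub_rpow_le {a b c x y : ℝ} (ha : 0 < a) (hx : x ∈ Set.Icc a b)
    (hy : y ∈ Set.Icc a b) :
    |x ^ c - y ^ c| ≤ (|c| * (a ^ (c - 1) + b ^ (c - 1))) * |x - y| := by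
  wlog hxy : y ≤ x generalizing x y
  · rw [abs_sub_comm (x ^ c), abs_sub_comm x]
    exact this hy hx (le_of_not_ge hxy)
  have hbnd : ∀ t ∈ Set.Ioo y x, |c * t ^ (c - 1)| ≤ |c| * (a ^ (c - 1) + b ^ (c - 1)) := by
    intro t ht
    have hta : a ≤ t := le_trans hy.1 ht.1.le
    have htb : t ≤ b := le_trans ht.2.le hx.2
    have htpos : 0 < t := lt_of_lt_of_le ha hta
    rw [abs_mul, abs_of_nonneg (rpow_nonneg htpos.le _)]
    have ht1 : t ^ (c - 1) ≤ a ^ (c - 1) + b ^ (c - 1) := by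
      rcases le_or_gt 0 (c - 1) with h | h
      · have := rpow_le_rpow htpos.le htb h
        nlinarith [rpow_nonneg ha.le (c-1)]
      · have := rpow_le_rpow_of_nonpos ha hta h.le
        nlinarith [rpow_nonneg (le_trans ha.le hta) (c-1), rpow_nonneg ha.le (c-1), rpow_nonneg (ha.le.trans (hta.trans htb)) (c-1)]
    exact mul_le_mul_of_nonneg_left ht1 (abs_nonneg c)
  have := abs_sub_le_of_deriv_le (f := fun t => t ^ c) (f' := fun t => c * t ^ (c - 1))
    hxy ?_ ?_ hbnd
  · rwa [abs_of_nonneg (by linarith : (0:ℝ) ≤ x - y)]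
  · intro t ht
    exact (Real.continuousAt_rpow_const t c (Or.inl (ne_of_gt (lt_of_lt_of_le ha (le_trans hy.1 ht.1))))).continuousWithinAt
  · intro t ht
    have ht0 : t ≠ 0 := ne_of_gt (lt_of_lt_of_le ha (le_trans hy.1 ht.1.le))
    exact Real.hasDerivAt_rpow_const (Or.inl ht0)

lemma deriv_even_zero {f : ℝ → ℝ} (hf : ∀ t, f (-t) = f t) : deriv f 0 = 0 := by
  have h1 : (fun x : ℝ => f (-x)) = f := funext hf
  have h2 := deriv_comp_neg (f := f) (x := (0:ℝ))
  rw [h1, neg_zero] at h2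
  linarith

lemma contDiff_rpow_comp {f : ℝ → ℝ} (hf : ContDiff ℝ (⊤:ℕ∞) f)
    (hpos : ∀ t, 0 < f t) (c : ℝ) : ContDiff ℝ (⊤:ℕ∞) (fun t => f t ^ c) := by
  rw [contDiff_iff_contDiffAt]
  exact fun x => (hf.contDiffAt).rpow_const_of_ne (ne_of_gt (hpos x))

lemma hasDerivAt_rpow_comp {f : ℝ → ℝ} {t : ℝ} (hf : DifferentiableAt ℝ f t)
    (hne : f t ≠ 0) (c : ℝ) :
    HasDerivAt (fun s => f s ^ c) (c * f t ^ (c - 1) * deriv f t) t := by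
  have := (Real.hasDerivAt_rpow_const (p := c) (Or.inl hne)).comp t hf.hasDerivAt
  simpa [Function.comp_def, mul_comm, mul_assoc, mul_left_comm] using this

lemma rpow_le_add {a b c x : ℝ} (ha : 0 < a) (hx : x ∈ Set.Icc a b) :
    x ^ c ≤ a ^ c + b ^ c := by
  have hxpos : 0 < x := lt_of_lt_of_le ha hx.1
  rcases le_or_gt 0 c with h | h
  · have := rpow_le_rpow hxpos.le hx.2 h
    nlinarith [rpow_nonneg ha.le c]
  · have := rpow_le_rpow_of_nonpos ha hx.1 h.le
    nlinarith [rpow_nonneg (ha.le.trans (hx.1.trans hx.2)) c]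

section ODE

/-- Key derivative computation for χ(r) = r^(k+2) · Φ'(r). -/
lemma chi_deriv {k : ℕ} {m β γ r : ℝ} (hm : 0 < m) (hr : 0 < r) {φ : ℝ → ℝ}
    (hs : ContDiff ℝ (⊤:ℕ∞) φ) (hp : ∀ t, 0 < φ t)
    (hode : (((k:ℝ)+3)-1)/m * (deriv (deriv (fun t => φ t ^ m)) r
          + (((k:ℝ)+3)-1) * (deriv (fun t => φ t ^ m) r / r))
        + β * (r * deriv φ r) + γ * φ r = 0) :
    HasDerivAt (fun s => s^(k+2) * deriv (fun t => φ t ^ m) s)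
      (-(m/((k:ℝ)+2)) * (r^(k+2) * (β * (r * deriv φ r) + γ * φ r))) r := by
  have hΦs : ContDiff ℝ (⊤:ℕ∞) (fun t => φ t ^ m) := contDiff_rpow_comp hs hp m
  have hΦ' : ContDiff ℝ (⊤:ℕ∞) (deriv (fun t => φ t ^ m)) :=
    (contDiff_infty_iff_deriv.mp (by exact_mod_cast hΦs)).2
  have hd2 : HasDerivAt (deriv (fun t => φ t ^ m))
      (deriv (deriv (fun t => φ t ^ m)) r) r :=
    ((hΦ'.differentiable (by simp)) r).hasDerivAt
  have hpow : HasDerivAt (fun s : ℝ => s^(k+2)) (((k:ℝ)+2) * r^(k+1)) r := by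
    simpa using hasDerivAt_pow (k+2) r
  have hprod := hpow.mul hd2
  refine hprod.congr_deriv ?_
  symm
  have hk2 : ((k:ℝ)+2) ≠ 0 := by positivity
  have hm' : m ≠ 0 := ne_of_gt hm
  have hr' : r ≠ 0 := ne_of_gt hr
  have hrk : r^(k+2) = r^(k+1) * r := by rw [← pow_succ]
  field_simp at hode ⊢
  linear_combination (-(r:ℝ)^(k+1)) * hode

end ODE

set_option maxHeartbeats 1000000 in
/-- Uniqueness for the radial ODE on `[0, R]`. -/
lemma ode_unique {k : ℕ} {m β γ : ℝ} (hm : 0 < m) (hβ : 0 ≤ β) (hγ : 0 ≤ γ)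
    {φ₁ φ₂ : ℝ → ℝ}
    (hs₁ : ContDiff ℝ (⊤:ℕ∞) φ₁) (hs₂ : ContDiff ℝ (⊤:ℕ∞) φ₂)
    (hp₁ : ∀ t, 0 < φ₁ t) (hp₂ : ∀ t, 0 < φ₂ t)
    (hode₁ : ∀ r : ℝ, 0 < r →
      (((k:ℝ)+3)-1)/m * (deriv (deriv (fun t => φ₁ t ^ m)) r
          + (((k:ℝ)+3)-1) * (deriv (fun t => φ₁ t ^ m) r / r))
        + β * (r * deriv φ₁ r) + γ * φ₁ r = 0)
    (hode₂ : ∀ r : ℝ, 0 < r →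
      (((k:ℝ)+3)-1)/m * (deriv (deriv (fun t => φ₂ t ^ m)) r
          + (((k:ℝ)+3)-1) * (deriv (fun t => φ₂ t ^ m) r / r))
        + β * (r * deriv φ₂ r) + γ * φ₂ r = 0)
    (he₁ : deriv (fun t => φ₁ t ^ m) 0 = 0)
    (he₂ : deriv (fun t => φ₂ t ^ m) 0 = 0)
    (h0 : φ₁ 0 = φ₂ 0) {R : ℝ} (hR : 0 < R) :
    ∀ t ∈ Set.Icc (0:ℝ) R, φ₁ t = φ₂ t := by
  -- notation
  set Φ₁ : ℝ → ℝ := fun t => φ₁ t ^ m with hΦ₁def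
  set Φ₂ : ℝ → ℝ := fun t => φ₂ t ^ m with hΦ₂def
  have hΦs₁ : ContDiff ℝ (⊤:ℕ∞) Φ₁ := contDiff_rpow_comp hs₁ hp₁ m
  have hΦs₂ : ContDiff ℝ (⊤:ℕ∞) Φ₂ := contDiff_rpow_comp hs₂ hp₂ m
  have hΦ's₁ : ContDiff ℝ (⊤:ℕ∞) (deriv Φ₁) :=
    (contDiff_infty_iff_deriv.mp (by exact_mod_cast hΦs₁)).2
  have hΦ's₂ : ContDiff ℝ (⊤:ℕ∞) (deriv Φ₂) :=
    (contDiff_infty_iff_deriv.mp (by exact_mod_cast hΦs₂)).2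
  have hΦc₁ : Continuous Φ₁ := hΦs₁.continuous
  have hΦc₂ : Continuous Φ₂ := hΦs₂.continuous
  have hΦ'c₁ : Continuous (deriv Φ₁) := hΦ's₁.continuous
  have hΦ'c₂ : Continuous (deriv Φ₂) := hΦ's₂.continuous
  have hΦp₁ : ∀ t, 0 < Φ₁ t := fun t => rpow_pos_of_pos (hp₁ t) m
  have hΦp₂ : ∀ t, 0 < Φ₂ t := fun t => rpow_pos_of_pos (hp₂ t) m
  have hm' : m ≠ 0 := ne_of_gt hm
  -- φ in terms of Φ
  have hφeq₁ : ∀ t, φ₁ t = Φ₁ t ^ (1/m) := by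
    intro t
    rw [hΦ₁def]
    simp only []
    rw [← Real.rpow_mul (hp₁ t).le, mul_one_div, div_self hm', Real.rpow_one]
  have hφeq₂ : ∀ t, φ₂ t = Φ₂ t ^ (1/m) := by
    intro t
    rw [hΦ₂def]
    simp only []
    rw [← Real.rpow_mul (hp₂ t).le, mul_one_div, div_self hm', Real.rpow_one]
  have hφ'₁ : ∀ t, deriv φ₁ t = (1/m) * Φ₁ t ^ (1/m - 1) * deriv Φ₁ t := by
    intro t
    have h := hasDerivAt_rpow_comp (f := Φ₁)
      ((hΦs₁.differentiable (by simp)) t) (ne_of_gt (hΦp₁ t)) (1/m)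
    have heq : (fun s => Φ₁ s ^ (1/m)) = φ₁ := funext fun s => (hφeq₁ s).symm
    rw [heq] at h
    exact h.deriv
  have hφ'₂ : ∀ t, deriv φ₂ t = (1/m) * Φ₂ t ^ (1/m - 1) * deriv Φ₂ t := by
    intro t
    have h := hasDerivAt_rpow_comp (f := Φ₂)
      ((hΦs₂.differentiable (by simp)) t) (ne_of_gt (hΦp₂ t)) (1/m)
    have heq : (fun s => Φ₂ s ^ (1/m)) = φ₂ := funext fun s => (hφeq₂ s).symm
    rw [heq] at h
    exact h.deriv
  -- bounds on [0, R]
  have hIcc : IsCompact (Set.Icc (0:ℝ) R) := isCompact_Icc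
  have hne : (Set.Icc (0:ℝ) R).Nonempty := Set.nonempty_Icc.2 hR.le
  obtain ⟨ta₁, hta₁, hmin₁⟩ := hIcc.exists_isMinOn hne hΦc₁.continuousOn
  obtain ⟨ta₂, hta₂, hmin₂⟩ := hIcc.exists_isMinOn hne hΦc₂.continuousOn
  obtain ⟨tb₁, htb₁, hmax₁⟩ := hIcc.exists_isMaxOn hne hΦc₁.continuousOn
  obtain ⟨tb₂, htb₂, hmax₂⟩ := hIcc.exists_isMaxOn hne hΦc₂.continuousOn
  obtain ⟨tB₁, htB₁, hmaxB₁⟩ := hIcc.exists_isMaxOn hne (hΦ'c₁.abs.continuousOn)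
  obtain ⟨tB₂, htB₂, hmaxB₂⟩ := hIcc.exists_isMaxOn hne (hΦ'c₂.abs.continuousOn)
  set a : ℝ := min (Φ₁ ta₁) (Φ₂ ta₂) with ha_def
  set b : ℝ := max (Φ₁ tb₁) (Φ₂ tb₂) with hb_def
  set B : ℝ := max |deriv Φ₁ tB₁| |deriv Φ₂ tB₂| with hB_def
  have ha : 0 < a := lt_min (hΦp₁ ta₁) (hΦp₂ ta₂)
  have hBnn : 0 ≤ B := le_max_of_le_left (abs_nonneg _)
  have hab₁ : ∀ t ∈ Set.Icc (0:ℝ) R, Φ₁ t ∈ Set.Icc a b := fun t ht =>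
    ⟨le_trans (min_le_left _ _) (hmin₁ ht), le_trans (hmax₁ ht) (le_max_left _ _)⟩
  have hab₂ : ∀ t ∈ Set.Icc (0:ℝ) R, Φ₂ t ∈ Set.Icc a b := fun t ht =>
    ⟨le_trans (min_le_right _ _) (hmin₂ ht), le_trans (hmax₂ ht) (le_max_right _ _)⟩
  have hB₁ : ∀ t ∈ Set.Icc (0:ℝ) R, |deriv Φ₁ t| ≤ B := fun t ht =>
    le_trans (hmaxB₁ ht) (le_max_left _ _)
  have hB₂ : ∀ t ∈ Set.Icc (0:ℝ) R, |deriv Φ₂ t| ≤ B := fun t ht =>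
    le_trans (hmaxB₂ ht) (le_max_right _ _)
  -- Lipschitz-type constants
  set p : ℝ := 1/m with hp_def
  set K₁ : ℝ := |p| * (a ^ (p-1) + b ^ (p-1)) with hK₁_def
  set Kb : ℝ := |p-1| * (a ^ (p-1-1) + b ^ (p-1-1)) with hKb_def
  set L₂ : ℝ := |p| * ((a ^ (p-1) + b ^ (p-1)) + Kb * B) with hL₂_def
  set L : ℝ := β * R * L₂ + γ * K₁ with hL_def
  have hb : 0 < b := lt_of_lt_of_le (hΦp₁ tb₁) (le_max_left _ _)
  have hKa_nn : 0 ≤ a ^ (p-1) + b ^ (p-1) :=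
    add_nonneg (rpow_nonneg ha.le _) (rpow_nonneg hb.le _)
  have hKb_nn : 0 ≤ Kb := mul_nonneg (abs_nonneg _)
    (add_nonneg (rpow_nonneg ha.le _) (rpow_nonneg hb.le _))
  have hK₁_nn : 0 ≤ K₁ := mul_nonneg (abs_nonneg _) hKa_nn
  have hL₂_nn : 0 ≤ L₂ := mul_nonneg (abs_nonneg _)
    (add_nonneg hKa_nn (mul_nonneg hKb_nn hBnn))
  have hL_nn : 0 ≤ L :=
    add_nonneg (mul_nonneg (mul_nonneg hβ hR.le) hL₂_nn) (mul_nonneg hγ hK₁_nn)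
  -- pointwise difference estimates
  have estφ : ∀ t ∈ Set.Icc (0:ℝ) R, |φ₁ t - φ₂ t| ≤ K₁ * |Φ₁ t - Φ₂ t| := by
    intro t ht
    rw [hφeq₁ t, hφeq₂ t]
    exact abs_rpow_sub_rpow_le ha (hab₁ t ht) (hab₂ t ht)
  have estφ' : ∀ t ∈ Set.Icc (0:ℝ) R,
      |deriv φ₁ t - deriv φ₂ t| ≤ L₂ * (|Φ₁ t - Φ₂ t| + |deriv Φ₁ t - deriv Φ₂ t|) := by
    intro t ht
    rw [hφ'₁ t, hφ'₂ t]
    have key : (1/m) * Φ₁ t ^ (1/m - 1) * deriv Φ₁ t - (1/m) * Φ₂ t ^ (1/m - 1) * deriv Φ₂ t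
        = (1/m) * ((Φ₁ t ^ (1/m - 1)) * (deriv Φ₁ t - deriv Φ₂ t)
            + (Φ₁ t ^ (1/m - 1) - Φ₂ t ^ (1/m - 1)) * deriv Φ₂ t) := by ring
    rw [key]
    rw [abs_mul]
    have h1 : |Φ₁ t ^ (1/m - 1) * (deriv Φ₁ t - deriv Φ₂ t)
        + (Φ₁ t ^ (1/m - 1) - Φ₂ t ^ (1/m - 1)) * deriv Φ₂ t|
        ≤ (a ^ (p-1) + b ^ (p-1)) * |deriv Φ₁ t - deriv Φ₂ t|
          + (Kb * |Φ₁ t - Φ₂ t|) * B := by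
      refine le_trans (abs_add_le _ _) ?_
      gcongr
      · rw [abs_mul]
        refine mul_le_mul_of_nonneg_right ?_ (abs_nonneg _)
        rw [abs_of_nonneg (rpow_nonneg (le_of_lt (lt_of_lt_of_le ha (hab₁ t ht).1)) _)]
        have : (1:ℝ)/m - 1 = p - 1 := by rw [hp_def]
        rw [this]
        exact rpow_le_add ha (hab₁ t ht)
      · rw [abs_mul]
        have h2 : |Φ₁ t ^ (1/m - 1) - Φ₂ t ^ (1/m - 1)| ≤ Kb * |Φ₁ t - Φ₂ t| := by
          have : (1:ℝ)/m - 1 = p - 1 := by rw [hp_def]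
          rw [this, hKb_def]
          exact abs_rpow_sub_rpow_le ha (hab₁ t ht) (hab₂ t ht)
        exact mul_le_mul h2 (hB₂ t ht) (abs_nonneg _) (by positivity)
    calc |(1:ℝ)/m| * |Φ₁ t ^ (1/m - 1) * (deriv Φ₁ t - deriv Φ₂ t)
        + (Φ₁ t ^ (1/m - 1) - Φ₂ t ^ (1/m - 1)) * deriv Φ₂ t|
        ≤ |p| * ((a ^ (p-1) + b ^ (p-1)) * |deriv Φ₁ t - deriv Φ₂ t|
          + (Kb * |Φ₁ t - Φ₂ t|) * B) := by
          rw [show |(1:ℝ)/m| = |p| from by rw [hp_def]]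
          exact mul_le_mul_of_nonneg_left h1 (abs_nonneg _)
      _ ≤ L₂ * (|Φ₁ t - Φ₂ t| + |deriv Φ₁ t - deriv Φ₂ t|) := by
          set d1 : ℝ := |Φ₁ t - Φ₂ t| with hd1_def
          set d2 : ℝ := |deriv Φ₁ t - deriv Φ₂ t| with hd2_def
          have hd1 : 0 ≤ d1 := abs_nonneg _
          have hd2 : 0 ≤ d2 := abs_nonneg _
          have hpn : 0 ≤ |p| := abs_nonneg _
          have e1 : L₂ * (d1 + d2) - |p| * ((a ^ (p-1) + b ^ (p-1)) * d2 + (Kb * d1) * B)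
              = |p| * ((a ^ (p-1) + b ^ (p-1)) * d1 + Kb * B * d2) := by
            rw [hL₂_def]; ring
          have e2 : 0 ≤ |p| * ((a ^ (p-1) + b ^ (p-1)) * d1 + Kb * B * d2) :=
            mul_nonneg hpn (add_nonneg (mul_nonneg hKa_nn hd1)
              (mul_nonneg (mul_nonneg hKb_nn hBnn) hd2))
          linarith
  have estG : ∀ t ∈ Set.Icc (0:ℝ) R,
      |(β * (t * deriv φ₁ t) + γ * φ₁ t) - (β * (t * deriv φ₂ t) + γ * φ₂ t)|
        ≤ L * (|Φ₁ t - Φ₂ t| + |deriv Φ₁ t - deriv Φ₂ t|) := by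
    intro t ht
    have h1 : |(β * (t * deriv φ₁ t) + γ * φ₁ t) - (β * (t * deriv φ₂ t) + γ * φ₂ t)|
        ≤ β * t * |deriv φ₁ t - deriv φ₂ t| + γ * |φ₁ t - φ₂ t| := by
      have : (β * (t * deriv φ₁ t) + γ * φ₁ t) - (β * (t * deriv φ₂ t) + γ * φ₂ t)
          = (β * t) * (deriv φ₁ t - deriv φ₂ t) + γ * (φ₁ t - φ₂ t) := by ring
      rw [this]
      calc |β * t * (deriv φ₁ t - deriv φ₂ t) + γ * (φ₁ t - φ₂ t)|
          ≤ |β * t * (deriv φ₁ t - deriv φ₂ t)| + |γ * (φ₁ t - φ₂ t)| := abs_add_le _ _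
        _ = β * t * |deriv φ₁ t - deriv φ₂ t| + γ * |φ₁ t - φ₂ t| := by
            rw [abs_mul, abs_mul, abs_mul, abs_of_nonneg hβ, abs_of_nonneg ht.1,
              abs_of_nonneg hγ]
    refine le_trans h1 ?_
    rw [hL_def]
    have h2 := estφ' t ht
    have h3 := estφ t ht
    set d1 : ℝ := |Φ₁ t - Φ₂ t| with hd1_def
    set d2 : ℝ := |deriv Φ₁ t - deriv Φ₂ t| with hd2_def
    have hd1 : 0 ≤ d1 := abs_nonneg _
    have hd2 : 0 ≤ d2 := abs_nonneg _
    have hβt : 0 ≤ β * t := mul_nonneg hβ ht.1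
    have hβR : 0 ≤ β * R := mul_nonneg hβ hR.le
    have hβtR : β * t ≤ β * R := mul_le_mul_of_nonneg_left ht.2 hβ
    have s1 : β * t * |deriv φ₁ t - deriv φ₂ t| ≤ β * R * (L₂ * (d1 + d2)) := by
      refine mul_le_mul hβtR h2 (abs_nonneg _) hβR
    have s2 : γ * |φ₁ t - φ₂ t| ≤ γ * (K₁ * d1) := mul_le_mul_of_nonneg_left h3 hγ
    have s3 : γ * (K₁ * d1) ≤ γ * (K₁ * (d1 + d2)) := by
      refine mul_le_mul_of_nonneg_left ?_ hγ
      refine mul_le_mul_of_nonneg_left ?_ hK₁_nn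
      linarith
    have e1 : (β * R * L₂ + γ * K₁) * (d1 + d2)
        = β * R * (L₂ * (d1 + d2)) + γ * (K₁ * (d1 + d2)) := by ring
    linarith
  -- the contraction constants
  set c₁ : ℝ := m / ((k:ℝ)+2) with hc₁_def
  have hc₁ : 0 < c₁ := by rw [hc₁_def]; positivity
  have hcL : 0 ≤ c₁ * L := mul_nonneg hc₁.le hL_nn
  set δ : ℝ := min 1 (1 / (2*c₁*L + 1)) with hδ_def
  have h2cL : 0 < 2*c₁*L + 1 := by linarith
  have hδpos : 0 < δ := lt_min one_pos (by positivity)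
  have hδ1 : δ ≤ 1 := min_le_left _ _
  have hδ2 : 2*c₁*L*δ < 1 := by
    have hh : δ ≤ 1/(2*c₁*L+1) := min_le_right _ _
    have h3 : (0:ℝ) ≤ 2*c₁*L := by linarith
    calc 2*c₁*L*δ ≤ 2*c₁*L*(1/(2*c₁*L+1)) := mul_le_mul_of_nonneg_left hh h3
      _ < 1 := by rw [mul_one_div, div_lt_one h2cL]; linarith
  -- the induction step
  have step : ∀ s ∈ Set.Icc (0:ℝ) R, (∀ t ∈ Set.Icc (0:ℝ) s, Φ₁ t = Φ₂ t) →
      ∀ t ∈ Set.Icc (0:ℝ) (min R (s+δ)), Φ₁ t = Φ₂ t := by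
    intro s hs hPs
    set e := min R (s+δ) with he_def
    have hse : s ≤ e := le_min hs.2 (by linarith)
    have he0 : 0 ≤ e := le_trans hs.1 hse
    have heR : e ≤ R := min_le_left _ _
    have heδ : e - s ≤ δ := by
      have := min_le_right R (s+δ); linarith
    have hΔΦ' : ∀ t ∈ Set.Icc (0:ℝ) s, deriv Φ₁ t = deriv Φ₂ t := by
      rcases eq_or_lt_of_le hs.1 with hs0 | hs0
      · intro t ht
        have ht0 : t = 0 := le_antisymm (by rw [← hs0] at ht; exact ht.2) ht.1
        rw [ht0, he₁, he₂]
      · have hIoo : Set.EqOn (deriv Φ₁) (deriv Φ₂) (Set.Ioo 0 s) := by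
          intro t ht
          have hnb : Set.Icc (0:ℝ) s ∈ nhds t := Icc_mem_nhds ht.1 ht.2
          exact Filter.EventuallyEq.deriv_eq
            (Filter.eventuallyEq_of_mem hnb fun y hy => hPs y hy)
        have hcl := hIoo.closure hΦ'c₁ hΦ'c₂
        rw [closure_Ioo (ne_of_lt hs0)] at hcl
        exact fun t ht => hcl ht
    have hDcont : Continuous (fun t => |Φ₁ t - Φ₂ t| + |deriv Φ₁ t - deriv Φ₂ t|) :=
      ((hΦc₁.sub hΦc₂).abs).add ((hΦ'c₁.sub hΦ'c₂).abs)
    obtain ⟨tm, htm, hmaxD⟩ := (isCompact_Icc (a := s) (b := e)).exists_isMaxOn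
      (Set.nonempty_Icc.2 hse) hDcont.continuousOn
    set ε : ℝ := |Φ₁ tm - Φ₂ tm| + |deriv Φ₁ tm - deriv Φ₂ tm| with hε_def
    have hεnn : 0 ≤ ε := add_nonneg (abs_nonneg _) (abs_nonneg _)
    have hsub : Set.Icc s e ⊆ Set.Icc (0:ℝ) R := fun τ hτ =>
      ⟨le_trans hs.1 hτ.1, le_trans hτ.2 heR⟩
    have hcLε : 0 ≤ c₁ * L * ε := mul_nonneg hcL hεnn
    -- bound on χ = t^(k+2)·Φ'
    have hχ : ∀ t ∈ Set.Icc s e, |t^(k+2) * deriv Φ₁ t - t^(k+2) * deriv Φ₂ t|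
        ≤ (c₁ * (t^(k+2) * (L * ε))) * (t - s) := by
      intro t ht
      have h0' : s^(k+2) * deriv Φ₁ s - s^(k+2) * deriv Φ₂ s = 0 := by
        rw [hΔΦ' s ⟨hs.1, le_refl s⟩]; ring
      have key := abs_sub_le_of_deriv_le
        (f := fun τ => τ^(k+2) * deriv Φ₁ τ - τ^(k+2) * deriv Φ₂ τ)
        (f' := fun τ => (-(m/((k:ℝ)+2)) * (τ^(k+2) * (β * (τ * deriv φ₁ τ) + γ * φ₁ τ)))
          - (-(m/((k:ℝ)+2)) * (τ^(k+2) * (β * (τ * deriv φ₂ τ) + γ * φ₂ τ))))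
        (a := s) (b := t) ht.1 ?_ ?_ (K := c₁ * (t^(k+2) * (L * ε))) ?_
      · have key' : |(t^(k+2) * deriv Φ₁ t - t^(k+2) * deriv Φ₂ t)
            - (s^(k+2) * deriv Φ₁ s - s^(k+2) * deriv Φ₂ s)|
            ≤ (c₁ * (t^(k+2) * (L * ε))) * (t - s) := key
        rw [h0', sub_zero] at key'; exact key'
      · exact (((continuous_pow (k+2)).mul hΦ'c₁).sub
          ((continuous_pow (k+2)).mul hΦ'c₂)).continuousOn
      · intro τ hτ
        have hτpos : 0 < τ := lt_of_le_of_lt hs.1 hτ.1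
        exact (chi_deriv hm hτpos hs₁ hp₁ (hode₁ τ hτpos)).sub
          (chi_deriv hm hτpos hs₂ hp₂ (hode₂ τ hτpos))
      · intro τ hτ
        have hτ' : τ ∈ Set.Icc s e := ⟨hτ.1.le, le_trans hτ.2.le ht.2⟩
        have hτR : τ ∈ Set.Icc (0:ℝ) R := hsub hτ'
        have hτ0 : 0 ≤ τ := hτR.1
        show |(-(m/((k:ℝ)+2)) * (τ^(k+2) * (β * (τ * deriv φ₁ τ) + γ * φ₁ τ)))
            - (-(m/((k:ℝ)+2)) * (τ^(k+2) * (β * (τ * deriv φ₂ τ) + γ * φ₂ τ)))|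
            ≤ c₁ * (t^(k+2) * (L * ε))
        have heq : (-(m/((k:ℝ)+2)) * (τ^(k+2) * (β * (τ * deriv φ₁ τ) + γ * φ₁ τ)))
            - (-(m/((k:ℝ)+2)) * (τ^(k+2) * (β * (τ * deriv φ₂ τ) + γ * φ₂ τ)))
            = c₁ * (τ^(k+2) * ((β * (τ * deriv φ₂ τ) + γ * φ₂ τ)
                - (β * (τ * deriv φ₁ τ) + γ * φ₁ τ))) := by
          rw [hc₁_def]; ring
        rw [heq, abs_mul, abs_mul, abs_of_pos hc₁, abs_of_nonneg (pow_nonneg hτ0 _)]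
        have hG : |(β * (τ * deriv φ₂ τ) + γ * φ₂ τ) - (β * (τ * deriv φ₁ τ) + γ * φ₁ τ)|
            ≤ L * ε := by
          rw [abs_sub_comm]
          refine le_trans (estG τ hτR) ?_
          refine mul_le_mul_of_nonneg_left ?_ hL_nn
          exact hmaxD hτ'
        have hpow : τ^(k+2) ≤ t^(k+2) := pow_le_pow_left₀ hτ0 hτ.2.le _
        have habs : (0:ℝ) ≤ |(β * (τ * deriv φ₂ τ) + γ * φ₂ τ)
            - (β * (τ * deriv φ₁ τ) + γ * φ₁ τ)| := abs_nonneg _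
        refine mul_le_mul_of_nonneg_left ?_ hc₁.le
        exact mul_le_mul hpow hG habs (pow_nonneg (le_trans hτ0 hτ.2.le) _)
    -- bound on Φ'
    have hΦ'b : ∀ t ∈ Set.Icc s e, |deriv Φ₁ t - deriv Φ₂ t| ≤ c₁ * L * ε * δ := by
      intro t ht
      rcases eq_or_lt_of_le (le_trans hs.1 ht.1 : (0:ℝ) ≤ t) with ht0 | ht0
      · have hs0 : s = 0 := le_antisymm (by rw [ht0]; exact ht.1) hs.1
        rw [← ht0, he₁, he₂, sub_self, abs_zero]
        exact mul_nonneg hcLε hδpos.le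
      · have h := hχ t ht
        have hXpos : 0 < t^(k+2) := pow_pos ht0 _
        have heq : t^(k+2) * deriv Φ₁ t - t^(k+2) * deriv Φ₂ t
            = t^(k+2) * (deriv Φ₁ t - deriv Φ₂ t) := by ring
        rw [heq, abs_mul, abs_of_pos hXpos] at h
        have hts : t - s ≤ δ := by linarith [ht.2, heδ]
        have h2 : t^(k+2) * |deriv Φ₁ t - deriv Φ₂ t| ≤ t^(k+2) * (c₁ * L * ε * δ) := by
          calc t^(k+2) * |deriv Φ₁ t - deriv Φ₂ t|
              ≤ (c₁ * (t^(k+2) * (L * ε))) * (t - s) := h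
            _ = t^(k+2) * (c₁ * L * ε * (t - s)) := by ring
            _ ≤ t^(k+2) * (c₁ * L * ε * δ) := by
                refine mul_le_mul_of_nonneg_left ?_ hXpos.le
                exact mul_le_mul_of_nonneg_left hts hcLε
        exact le_of_mul_le_mul_left h2 hXpos
    -- bound on Φ
    have hΦb : ∀ t ∈ Set.Icc s e, |Φ₁ t - Φ₂ t| ≤ c₁ * L * ε * δ := by
      intro t ht
      have h0' : Φ₁ s - Φ₂ s = 0 := by rw [hPs s ⟨hs.1, le_refl s⟩]; ring
      have key := abs_sub_le_of_deriv_le (f := fun τ => Φ₁ τ - Φ₂ τ)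
        (f' := fun τ => deriv Φ₁ τ - deriv Φ₂ τ) (a := s) (b := t) ht.1
        ((hΦc₁.sub hΦc₂).continuousOn) ?_ (K := c₁ * L * ε * δ) ?_
      · have key' : |(Φ₁ t - Φ₂ t) - (Φ₁ s - Φ₂ s)| ≤ (c₁ * L * ε * δ) * (t - s) := key
        rw [h0', sub_zero] at key'
        have key := key'
        have hts : t - s ≤ 1 := by linarith [ht.2, heδ, hδ1]
        have : (c₁ * L * ε * δ) * (t - s) ≤ (c₁ * L * ε * δ) * 1 :=
          mul_le_mul_of_nonneg_left hts (mul_nonneg hcLε hδpos.le)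
        rw [mul_one] at this
        exact le_trans key this
      · intro τ hτ
        exact ((hΦs₁.differentiable (by simp) τ).hasDerivAt).sub
          ((hΦs₂.differentiable (by simp) τ).hasDerivAt)
      · intro τ hτ
        exact hΦ'b τ ⟨hτ.1.le, le_trans hτ.2.le ht.2⟩
    -- contraction: ε = 0
    have hεle : ε ≤ 2*c₁*L*δ*ε := by
      have h1 := hΦb tm htm
      have h2 := hΦ'b tm htm
      linarith [h1, h2, hε_def.le, hε_def.ge]
    have hε0 : ε = 0 := by
      rcases eq_or_lt_of_le hεnn with h | h
      · exact h.symm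
      · exfalso
        have := mul_lt_mul_of_pos_right hδ2 h
        rw [one_mul] at this
        nlinarith [hεle, this]
    -- conclude
    intro t ht
    rcases le_or_gt t s with hts | hts
    · exact hPs t ⟨ht.1, hts⟩
    · have htse : t ∈ Set.Icc s e := ⟨hts.le, ht.2⟩
      have hD := hmaxD htse
      rw [hε_def] at hε0
      have : |Φ₁ t - Φ₂ t| ≤ 0 := by
        have := abs_nonneg (deriv Φ₁ t - deriv Φ₂ t)
        have := abs_nonneg (Φ₁ t - Φ₂ t)
        simp only [Set.mem_setOf_eq] at hD
        linarith [hε0, hD]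
      exact sub_eq_zero.mp (abs_nonpos_iff.mp this)
  -- supremum argument
  have hΦ00 : Φ₁ 0 = Φ₂ 0 := by rw [hΦ₁def, hΦ₂def]; simp only []; rw [h0]
  set S : Set ℝ := {s | s ∈ Set.Icc (0:ℝ) R ∧ ∀ t ∈ Set.Icc (0:ℝ) s, Φ₁ t = Φ₂ t}
    with hS_def
  have h0S : (0:ℝ) ∈ S := by
    refine ⟨⟨le_refl 0, hR.le⟩, ?_⟩
    intro t ht
    have ht0 : t = 0 := le_antisymm ht.2 ht.1
    rw [ht0]; exact hΦ00
  have hSne : S.Nonempty := ⟨0, h0S⟩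
  have hbdd : BddAbove S := ⟨R, fun x hx => hx.1.2⟩
  set σ := sSup S with hσ_def
  have hσmem : σ ∈ Set.Icc (0:ℝ) R :=
    ⟨le_csSup hbdd h0S, csSup_le hSne fun x hx => hx.1.2⟩
  have hσS : ∀ t ∈ Set.Icc (0:ℝ) σ, Φ₁ t = Φ₂ t := by
    intro t ht
    rcases eq_or_lt_of_le ht.2 with h | h
    · rcases eq_or_lt_of_le ht.1 with h0t | h0t
      · rw [← h0t]; exact hΦ00
      · have hIco : Set.EqOn Φ₁ Φ₂ (Set.Ico 0 t) := by
          intro y hy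
          obtain ⟨x, hxS, hyx⟩ := exists_lt_of_lt_csSup hSne
            (lt_of_lt_of_le hy.2 (le_of_eq h))
          exact hxS.2 y ⟨hy.1, hyx.le⟩
        have hcl := hIco.closure hΦc₁ hΦc₂
        rw [closure_Ico h0t.ne] at hcl
        exact hcl ⟨ht.1, le_refl t⟩
    · obtain ⟨x, hxS, hx⟩ := exists_lt_of_lt_csSup hSne h
      exact hxS.2 t ⟨ht.1, hx.le⟩
  have hσR : σ = R := by
    by_contra hne'
    have hσR' : σ < R := lt_of_le_of_ne hσmem.2 hne'
    have hstep := step σ hσmem hσS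
    have heS : min R (σ+δ) ∈ S := by
      refine ⟨⟨le_min hR.le (by linarith [hσmem.1, hδpos.le]), min_le_left _ _⟩, hstep⟩
    have h1 : min R (σ+δ) ≤ σ := le_csSup hbdd heS
    have h2 : σ < min R (σ+δ) := lt_min hσR' (by linarith [hδpos])
    linarith
  intro t ht
  have hΦeq : Φ₁ t = Φ₂ t := hσS t (by rw [hσR]; exact ht)
  rw [hφeq₁ t, hφeq₂ t, hΦeq]

/-- Derivative of a function along a line. -/
lemma hasDerivAt_line {n : ℕ} {v : Euc n → ℝ} (hv : ContDiff ℝ (⊤:ℕ∞) v)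
    (x w : Euc n) (t : ℝ) :
    HasDerivAt (fun s : ℝ => v (x + s • w)) (fderiv ℝ v (x + t • w) w) t := by
  have hc : HasDerivAt (fun s : ℝ => x + s • w) w t := by
    simpa using ((hasDerivAt_id (t:ℝ)).smul_const w).const_add x
  exact (hv.differentiable (by simp) (x + t • w)).hasFDerivAt.comp_hasDerivAt t hc

/-- The `lap` summand equals a second derivative along the line. -/
lemma lap_term_eq {n : ℕ} {v : Euc n → ℝ} (hv : ContDiff ℝ (⊤:ℕ∞) v) (x w : Euc n) :
    fderiv ℝ (fun y => fderiv ℝ v y w) x w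
      = deriv (deriv (fun s : ℝ => v (x + s • w))) 0 := by
  have hg : ContDiff ℝ (⊤:ℕ∞) (fun y => fderiv ℝ v y w) := by
    exact (ContinuousLinearMap.apply ℝ ℝ w).contDiff.comp (hv.fderiv_right (by exact_mod_cast le_top))
  have h1 : deriv (fun s : ℝ => v (x + s • w)) = fun s => fderiv ℝ v (x + s • w) w :=
    funext fun s => (hasDerivAt_line hv x w s).deriv
  rw [h1]
  have hc : HasDerivAt (fun s : ℝ => x + s • w) w 0 := by
    simpa using ((hasDerivAt_id (0:ℝ)).smul_const w).const_add x
  have h2 : HasDerivAt (fun s : ℝ => fderiv ℝ v (x + s • w) w)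
      (fderiv ℝ (fun y => fderiv ℝ v y w) (x + (0:ℝ) • w) w) 0 :=
    HasFDerivAt.comp_hasDerivAt (f := fun s : ℝ => x + s • w) 0 (hg.differentiable (by simp) (x + (0:ℝ) • w)).hasFDerivAt hc
  rw [h2.deriv]
  norm_num

/-- second derivative of t ↦ Φ(√(r²+t²)) at 0, for r > 0. -/
lemma second_deriv_sqrt {Φ : ℝ → ℝ} (hΦ : ContDiff ℝ (⊤:ℕ∞) Φ) {r : ℝ} (hr : 0 < r) :
    deriv (deriv (fun s : ℝ => Φ (Real.sqrt (r^2 + s^2)))) 0 = deriv Φ r / r := by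
  
  have hΦ' : ContDiff ℝ (⊤:ℕ∞) (deriv Φ) := (contDiff_infty_iff_deriv.mp (by exact_mod_cast hΦ)).2
  have hρpos : ∀ s : ℝ, 0 < r^2 + s^2 := fun s => by positivity
  have hρ : ∀ s : ℝ, HasDerivAt (fun s : ℝ => Real.sqrt (r^2 + s^2))
      (s / Real.sqrt (r^2 + s^2)) s := by
    intro s
    have h1 : HasDerivAt (fun s : ℝ => r^2 + s^2) (2*s) s := by
      simpa using ((hasDerivAt_pow 2 s).const_add (r^2))
    have := (Real.hasDerivAt_sqrt (ne_of_gt (hρpos s))).comp s h1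
    refine this.congr_deriv ?_
    symm
    field_simp
  have hρ0 : Real.sqrt (r^2 + 0^2) = r := by
    rw [show r^2 + 0^2 = r^2 by ring, Real.sqrt_sq hr.le]
  have hd1 : deriv (fun s : ℝ => Φ (Real.sqrt (r^2 + s^2)))
      = fun s => (deriv Φ (Real.sqrt (r^2+s^2)) / Real.sqrt (r^2+s^2)) * s := by
    funext s
    have := ((hΦ.differentiable (by simp)).differentiableAt.hasDerivAt.comp s (hρ s))
    have h := this.deriv
    simp only [Function.comp_def] at h
    rw [h]; ring
  rw [hd1]
  have hsq : DifferentiableAt ℝ (fun s : ℝ => Real.sqrt (r^2 + s^2)) 0 := (hρ 0).differentiableAt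
  have hP : DifferentiableAt ℝ
      (fun s : ℝ => deriv Φ (Real.sqrt (r^2+s^2)) / Real.sqrt (r^2+s^2)) 0 := by
    apply DifferentiableAt.div
    · exact ((hΦ'.differentiable (by simp)).differentiableAt).comp 0 hsq
    · exact hsq
    · rw [hρ0]; exact ne_of_gt hr
  have := (hP.hasDerivAt.mul (hasDerivAt_id (0:ℝ)))
  simp only [id_eq] at this
  rw [show (fun s : ℝ => deriv Φ (Real.sqrt (r^2+s^2)) / Real.sqrt (r^2+s^2) * s) = ((fun s : ℝ => deriv Φ (Real.sqrt (r^2+s^2)) / Real.sqrt (r^2+s^2)) * id) from rfl, this.deriv]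
  simp [hρ0, Real.sqrt_sq hr.le]

lemma norm_combo {n : ℕ} {i j : Fin n} (hij : j ≠ i) (r s : ℝ) :
    ‖r • EuclideanSpace.single i (1:ℝ) + s • EuclideanSpace.single j (1:ℝ)‖
      = Real.sqrt (r^2 + s^2) := by
  have h : ‖r • EuclideanSpace.single i (1:ℝ) + s • EuclideanSpace.single j (1:ℝ)‖^2
      = r^2 + s^2 := by
    rw [norm_add_sq_real]
    rw [real_inner_smul_left, real_inner_smul_right, EuclideanSpace.inner_single_left]
    simp [norm_smul, EuclideanSpace.norm_single, EuclideanSpace.single_apply, hij]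
  rw [← h, Real.sqrt_sq (norm_nonneg _)]

lemma radial_lap {n : ℕ} {v : Euc n → ℝ} (hv : ContDiff ℝ (⊤:ℕ∞) v)
    (hrad : IsRadial v) (i0 : Fin n) {r : ℝ} (hr : 0 < r) :
    lap v (r • EuclideanSpace.single i0 (1:ℝ))
      = deriv (deriv (fun t : ℝ => v (t • EuclideanSpace.single i0 (1:ℝ)))) r
        + ((n:ℝ) - 1) * (deriv (fun t : ℝ => v (t • EuclideanSpace.single i0 (1:ℝ))) r / r) := by
  set E : Euc n := EuclideanSpace.single i0 (1:ℝ) with hE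
  set Φ : ℝ → ℝ := fun t => v (t • E) with hΦdef
  have hΦ : ContDiff ℝ (⊤:ℕ∞) Φ := by
    have h1 : Φ = v ∘ (fun t : ℝ => t • E) := rfl
    rw [h1]
    exact hv.comp (contDiff_id.smul contDiff_const)
  have hterm : ∀ i : Fin n,
      fderiv ℝ (fun y => fderiv ℝ v y (EuclideanSpace.single i 1)) (r • E)
        (EuclideanSpace.single i 1)
      = if i = i0 then deriv (deriv Φ) r else deriv Φ r / r := by
    intro i
    rw [lap_term_eq hv]
    by_cases hi : i = i0
    · subst hi
      rw [if_pos rfl]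
      have h2 : (fun s : ℝ => v (r • E + s • EuclideanSpace.single i 1))
          = fun s => Φ (r + s) := by
        funext s
        rw [hΦdef]
        simp only []
        rw [← hE, ← add_smul]
      rw [h2]
      have h3 : deriv (fun s : ℝ => Φ (r + s)) = fun s => deriv Φ (r + s) :=
        funext fun s => deriv_comp_const_add Φ r s
      rw [h3]
      rw [deriv_comp_const_add (deriv Φ) r 0, add_zero]
    · rw [if_neg hi]
      have h2 : (fun s : ℝ => v (r • E + s • EuclideanSpace.single i 1))
          = fun s => Φ (Real.sqrt (r^2 + s^2)) := by
        funext s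
        apply hrad
        rw [norm_combo hi r s, norm_smul, hE, EuclideanSpace.norm_single]
        simp [abs_of_nonneg (Real.sqrt_nonneg _)]
      rw [h2]
      exact second_deriv_sqrt hΦ hr
  unfold lap
  rw [Finset.sum_congr rfl (fun i _ => hterm i)]
  rw [← Finset.add_sum_erase Finset.univ _ (Finset.mem_univ i0)]
  rw [if_pos rfl]
  have hconst : ∑ i ∈ Finset.univ.erase i0,
      (if i = i0 then deriv (deriv Φ) r else deriv Φ r / r)
      = ((n:ℝ) - 1) * (deriv Φ r / r) := by
    rw [Finset.sum_congr rfl (fun i hi => if_neg (Finset.ne_of_mem_erase hi))]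
    rw [Finset.sum_const, Finset.card_erase_of_mem (Finset.mem_univ i0), Finset.card_univ,
      Fintype.card_fin, nsmul_eq_mul]
    have hn1 : (1:ℕ) ≤ n := Nat.one_le_of_lt (Fin.pos i0)
    push_cast [Nat.cast_sub hn1]
    ring
  rw [hconst]


section Reduce

lemma inner_gradient_eq {n : ℕ} (u : Euc n → ℝ) (x : Euc n) :
    ⟪x, gradient u x⟫ = fderiv ℝ u x x := by
  rw [real_inner_comm]
  exact InnerProductSpace.toDual_symm_apply

lemma reduce {k : ℕ} {m β γ : ℝ} {u : Euc (k+3) → ℝ}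
    (hpos : ∀ x, 0 < u x) (hu : ContDiff ℝ (⊤:ℕ∞) u) (hrad : IsRadial u)
    (hpde : YamabePDE m β γ u) {i0 : Fin (k+3)} {r : ℝ} (hr : 0 < r) :
    (((k:ℝ)+3)-1)/m * (deriv (deriv (fun t : ℝ =>
          u (t • EuclideanSpace.single i0 (1:ℝ)) ^ m)) r
        + (((k:ℝ)+3)-1) * (deriv (fun t : ℝ =>
            u (t • EuclideanSpace.single i0 (1:ℝ)) ^ m) r / r))
      + β * (r * deriv (fun t : ℝ => u (t • EuclideanSpace.single i0 (1:ℝ))) r)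
      + γ * u (r • EuclideanSpace.single i0 (1:ℝ)) = 0 := by
  set E : Euc (k+3) := EuclideanSpace.single i0 (1:ℝ) with hE
  have hv : ContDiff ℝ (⊤:ℕ∞) (fun y => u y ^ m) := by
    rw [contDiff_iff_contDiffAt]
    exact fun x => (hu.contDiffAt).rpow_const_of_ne (ne_of_gt (hpos x))
  have hvrad : IsRadial (fun y => u y ^ m) := fun x y hxy => by show u x ^ m = u y ^ m; rw [hrad x y hxy]
  have hpde' := hpde (r • E)
  rw [radial_lap hv hvrad i0 hr] at hpde'
  rw [inner_gradient_eq] at hpde'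
  have hlin : HasDerivAt (fun s : ℝ => u (s • E)) (fderiv ℝ u (r • E) E) r := by
    have h := hasDerivAt_line hu 0 E r
    simp only [zero_add] at h
    exact h
  have hsmul : (fderiv ℝ u (r • E)) (r • E) = r * (fderiv ℝ u (r • E)) E := by
    rw [(fderiv ℝ u (r • E)).map_smul]
    simp
  rw [hsmul, ← hlin.deriv] at hpde'
  have hcast : ((k+3:ℕ):ℝ) = (k:ℝ)+3 := by push_cast; ring
  rw [hcast] at hpde'
  exact hpde'

/-- deriv of the profile of `u^m` at 0 vanishes, by radial symmetry. -/
lemma profile_deriv_zero {k : ℕ} {m : ℝ} {u : Euc (k+3) → ℝ} (hrad : IsRadial u)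
    {i0 : Fin (k+3)} :
    deriv (fun t : ℝ => u (t • EuclideanSpace.single i0 (1:ℝ)) ^ m) 0 = 0 := by
  apply deriv_even_zero
  intro t
  have : u ((-t) • EuclideanSpace.single i0 (1:ℝ))
      = u (t • EuclideanSpace.single i0 (1:ℝ)) := by
    apply hrad
    rw [norm_smul, norm_smul, norm_neg]
  rw [this]

end Reduce

/-- radial Yamabe solitons are determined by the value at the origin. -/
theorem radial_soliton_unique (n : ℕ) (hn : 3 ≤ n)
    (m ρ β γ : ℝ)
    (hm : m = ((n : ℝ) - 2) / ((n : ℝ) + 2))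
    (hρ : ρ = 1 ∨ ρ = 0 ∨ ρ = -1)
    (hβ : 0 ≤ β)
    (hγ : γ = (2 * β + ρ) / (1 - m))
    (hγpos : 0 < γ)
    (u₁ u₂ : Euc n → ℝ)
    (h₁pos : ∀ x, 0 < u₁ x) (h₁smooth : ContDiff ℝ (⊤ : ℕ∞) u₁)
    (h₁rad : IsRadial u₁) (h₁pde : YamabePDE m β γ u₁)
    (h₂pos : ∀ x, 0 < u₂ x) (h₂smooth : ContDiff ℝ (⊤ : ℕ∞) u₂)
    (h₂rad : IsRadial u₂) (h₂pde : YamabePDE m β γ u₂)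
    (h0 : u₁ 0 = u₂ 0) :
    u₁ = u₂ := by
  obtain ⟨k, rfl⟩ : ∃ k, n = k + 3 := ⟨n - 3, by omega⟩
  have hcast : ((k+3:ℕ):ℝ) = (k:ℝ)+3 := by push_cast; ring
  have hk0 : (0:ℝ) ≤ (k:ℝ) := Nat.cast_nonneg k
  have hm0 : 0 < m := by
    rw [hm, hcast]
    apply div_pos <;> linarith
  set i0 : Fin (k+3) := ⟨0, by omega⟩ with hi0
  set E : Euc (k+3) := EuclideanSpace.single i0 (1:ℝ) with hE
  set φ₁ : ℝ → ℝ := fun t => u₁ (t • E) with hφ₁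
  set φ₂ : ℝ → ℝ := fun t => u₂ (t • E) with hφ₂
  have hφs₁ : ContDiff ℝ (⊤:ℕ∞) φ₁ := h₁smooth.comp (contDiff_id.smul contDiff_const)
  have hφs₂ : ContDiff ℝ (⊤:ℕ∞) φ₂ := h₂smooth.comp (contDiff_id.smul contDiff_const)
  have hφp₁ : ∀ t, 0 < φ₁ t := fun t => h₁pos _
  have hφp₂ : ∀ t, 0 < φ₂ t := fun t => h₂pos _
  have hode₁ : ∀ r : ℝ, 0 < r →
      (((k:ℝ)+3)-1)/m * (deriv (deriv (fun t : ℝ => φ₁ t ^ m)) r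
          + (((k:ℝ)+3)-1) * (deriv (fun t : ℝ => φ₁ t ^ m) r / r))
        + β * (r * deriv φ₁ r) + γ * φ₁ r = 0 :=
    fun r hr => reduce h₁pos h₁smooth h₁rad h₁pde hr
  have hode₂ : ∀ r : ℝ, 0 < r →
      (((k:ℝ)+3)-1)/m * (deriv (deriv (fun t : ℝ => φ₂ t ^ m)) r
          + (((k:ℝ)+3)-1) * (deriv (fun t : ℝ => φ₂ t ^ m) r / r))
        + β * (r * deriv φ₂ r) + γ * φ₂ r = 0 :=
    fun r hr => reduce h₂pos h₂smooth h₂rad h₂pde hr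
  have he₁ : deriv (fun t : ℝ => φ₁ t ^ m) 0 = 0 := profile_deriv_zero h₁rad
  have he₂ : deriv (fun t : ℝ => φ₂ t ^ m) 0 = 0 := profile_deriv_zero h₂rad
  have h0' : φ₁ 0 = φ₂ 0 := by
    show u₁ ((0:ℝ) • E) = u₂ ((0:ℝ) • E)
    rw [zero_smul, h0]
  funext x
  have hRpos : (0:ℝ) < ‖x‖ + 1 := by positivity
  have key := ode_unique hm0 hβ hγpos.le hφs₁ hφs₂ hφp₁ hφp₂ hode₁ hode₂ he₁ he₂ h0'
    (R := ‖x‖ + 1) hRpos ‖x‖ ⟨norm_nonneg x, by linarith⟩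
  have hnormE : ‖(‖x‖ : ℝ) • E‖ = ‖x‖ := by
    rw [norm_smul, hE, EuclideanSpace.norm_single]
    simp [abs_of_nonneg (norm_nonneg x)]
  have h₁x : u₁ x = u₁ (‖x‖ • E) := h₁rad x (‖x‖ • E) (by rw [hnormE])
  have h₂x : u₂ x = u₂ (‖x‖ • E) := h₂rad x (‖x‖ • E) (by rw [hnormE])
  rw [h₁x, h₂x]
  exact key
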